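/- Let p be a prime and k, m, n, a, b, c, u positive integers with q = p^m, k | q−1, n = (q−1)/k, m = ab, n = bc, b > 1, u = (p^a−1)/c, such that c is a primitive divisor of p^a−1, n is a primitive divisor of p^m−1, and (p−1) | c. For a prime power Q, divisor j of Q−1 and α ∈ F_Q, write N_{j,α}(F_Q) = 1 + #{(x,y) ∈ F_Q × F_Q : y^p − y = α x^j}. Then for each β ∈ F_{p^m} there exist α_1, …, α_b ∈ F_{p^a} such that b·N_{k,β}(F_{p^m}) ≡ Ψ_b(p^a)·Σ_{i=1}^b N_{u,α_i}(F_{p^a}) (mod p^a) and b·N_{k,β}(F_{p^m}) ≡ p^{a(b−1)}·Σ_{i=1}^b N_{u,α_i}(F_{p^a}) (mod Ψ_{b−1}(p^a)). -/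

import Mathlib

open scoped BigOperators

/-- `Ψ_b(x) = x^(b-1) + ⋯ + x + 1`. -/
def psi (b x : ℕ) : ℕ := ∑ i ∈ Finset.range b, x ^ i

/-- `n` is a primitive divisor of `p^m - 1`. -/
def IsPrimitiveDivisor (n p m : ℕ) : Prop :=
  n ∣ p ^ m - 1 ∧ ∀ t : ℕ, 1 ≤ t → t < m → ¬ n ∣ p ^ t - 1

/-- `N_{j,α}(F) = 1 +` the number of affine points of the Artin–Schreier curve
`y^p - y = α x^j` over the finite field `F`. -/
def ascount (p : ℕ) (F : Type) [Field F] [Fintype F] [DecidableEq F] (j : ℕ) (α : F) : ℕ :=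
  1 + (Finset.univ.filter fun xy : F × F => xy.2 ^ p - xy.2 = α * xy.1 ^ j).card

open Finset

set_option linter.unusedSectionVars false

section AuxCounting

variable {K : Type} [Field K] [Fintype K] [DecidableEq K]

lemma fiber_card (A : Finset K) (f : K → K) (hf : ∀ x y, f (x - y) = f x - f y)
    (hAsub : ∀ x ∈ A, ∀ y ∈ A, x - y ∈ A) (hAadd : ∀ x ∈ A, ∀ y ∈ A, x + y ∈ A)
    {s y0 : K} (hy0 : y0 ∈ A) (h0 : f y0 = s) :
    (A.filter fun y => f y = s).card = (A.filter fun y => f y = 0).card := by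
  apply Finset.card_bij' (fun y _ => y - y0) (fun y _ => y + y0)
  · intro y hy
    simp only [mem_filter] at hy ⊢
    exact ⟨hAsub y hy.1 y0 hy0, by rw [hf, hy.2, h0, sub_self]⟩
  · intro y hy
    simp only [mem_filter] at hy ⊢
    refine ⟨hAadd y hy.1 y0 hy0, ?_⟩
    have h1 : f (y + y0) - f y0 = f y := by rw [← hf, add_sub_cancel_right]
    rw [hy.2] at h1
    rw [sub_eq_zero] at h1
    rw [h1, h0]
  · intro y _; simp
  · intro y _; simp

/-- counting points by fibers of an additive map -/
lemma comp_count (A : Finset K) (f : K → K) (hf : ∀ x y, f (x - y) = f x - f y)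
    (hAsub : ∀ x ∈ A, ∀ y ∈ A, x - y ∈ A) (hAadd : ∀ x ∈ A, ∀ y ∈ A, x + y ∈ A)
    (R : K → Prop) [DecidablePred R] (hR : ∀ s, R s → ∃ x ∈ A, f x = s) :
    (A.filter fun x => R (f x)).card
      = (univ.filter R).card * (A.filter fun x => f x = 0).card := by
  rw [Finset.card_eq_sum_card_fiberwise (f := f) (t := univ.filter R)
    (fun x hx => by simp only [Finset.mem_coe, mem_filter] at hx ⊢; exact ⟨mem_univ _, hx.2⟩)]
  rw [Finset.sum_congr rfl (fun w hw => ?_), Finset.sum_const, smul_eq_mul]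
  simp only [mem_filter] at hw
  obtain ⟨y0, hy0A, hy0⟩ := hR w hw.2
  rw [show (A.filter fun x => R (f x)).filter (fun x => f x = w)
      = A.filter (fun x => f x = w) from by
    ext x; simp only [mem_filter, and_assoc]
    constructor
    · rintro ⟨h1, _, h3⟩; exact ⟨h1, h3⟩
    · rintro ⟨h1, h3⟩; exact ⟨h1, by rw [h3]; exact hw.2, h3⟩]
  exact fiber_card A f hf hAsub hAadd hy0A hy0

lemma gen_exists : ∃ g : Kˣ, orderOf g = Fintype.card K - 1 ∧ ∀ v : Kˣ, ∃ t : ℕ, g ^ t = v := by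
  obtain ⟨g, hg⟩ := IsCyclic.exists_generator (α := Kˣ)
  refine ⟨g, ?_, fun v => ?_⟩
  · rw [orderOf_eq_card_of_forall_mem_zpowers hg, Nat.card_eq_fintype_card, Fintype.card_units]
  · have := (isOfFinOrder_of_finite g).mem_powers_iff_mem_zpowers.2 (hg v)
    obtain ⟨t, ht⟩ := this
    exact ⟨t, ht⟩

lemma roots_card {d e : ℕ} (hd : 0 < d) (hde : d * e = Fintype.card K - 1) :
    ((univ : Finset K).filter fun w => w ^ e = 1).card = e ∧
    (∀ w : K, w ^ e = 1 → ∃ x : K, x ^ d = w) := by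
  obtain ⟨g, hord, hgen⟩ := gen_exists (K := K)
  have hcard2 : 0 < Fintype.card K - 1 := by
    have := Fintype.one_lt_card (α := K); omega
  have he : 0 < e := by
    rcases Nat.eq_zero_or_pos e with h | h
    · rw [h, mul_zero] at hde; omega
    · exact h
  have hordd : orderOf (g ^ d) = e := by
    rw [orderOf_pow, hord, ← hde, Nat.gcd_comm, Nat.gcd_eq_left ⟨e, rfl⟩,
      Nat.mul_div_cancel_left _ hd]
  have hmem : ∀ i : ℕ, (((g ^ d) ^ i : Kˣ) : K) ^ e = 1 := by
    intro i
    have : (((g ^ d) ^ i) ^ e : Kˣ) = 1 := by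
      rw [← pow_mul, mul_comm i e, pow_mul, ← hordd, pow_orderOf_eq_one, one_pow]
    calc (((g ^ d) ^ i : Kˣ) : K) ^ e = ((((g ^ d) ^ i) ^ e : Kˣ) : K) := by push_cast; ring
    _ = 1 := by rw [this]; rfl
  have hsurj : ∀ w : K, w ^ e = 1 → ∃ j : ℕ, j < e ∧ (((g ^ d) ^ j : Kˣ) : K) = w := by
    intro w hw
    have hw0 : w ≠ 0 := by
      intro h; rw [h, zero_pow he.ne'] at hw; exact zero_ne_one hw
    obtain ⟨t, ht⟩ := hgen (Units.mk0 w hw0)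
    have htw : (g : K) ^ t = w := by rw [← Units.val_pow_eq_pow_val, ht]; rfl
    have hve : (g ^ t : Kˣ) ^ e = 1 := by
      apply Units.ext
      push_cast
      rw [htw]; exact_mod_cast hw
    have hdvd : d * e ∣ t * e := by
      rw [← pow_mul] at hve
      have := orderOf_dvd_of_pow_eq_one hve
      rwa [hord, ← hde] at this
    have hdt : d ∣ t := (Nat.mul_dvd_mul_iff_right he).1 hdvd
    obtain ⟨t', rfl⟩ := hdt
    refine ⟨t' % e, Nat.mod_lt _ he, ?_⟩
    have h2 : (g ^ d) ^ (t' % e) = (g ^ d) ^ t' := by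
      rw [← hordd]; exact pow_mod_orderOf _ _
    rw [h2, ← pow_mul, Units.val_pow_eq_pow_val]
    exact htw
  constructor
  · apply Finset.card_eq_of_bijective (fun i _ => (((g ^ d) ^ i : Kˣ) : K))
    · intro w hw
      rw [mem_filter] at hw
      obtain ⟨j, hj, hjw⟩ := hsurj w hw.2
      exact ⟨j, hj, hjw⟩
    · intro i hi
      rw [mem_filter]
      exact ⟨mem_univ _, hmem i⟩
    · intro i j hi hj hij
      have : (g ^ d) ^ i = (g ^ d) ^ j := Units.ext hij
      exact pow_injOn_Iio_orderOf (by rwa [hordd, Set.mem_Iio])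
        (by rwa [hordd, Set.mem_Iio]) this
  · intro w hw
    obtain ⟨j, _, hjw⟩ := hsurj w hw
    exact ⟨((g : K)) ^ j, by rw [← hjw]; push_cast; ring⟩

lemma powcount {d e : ℕ} (hd : 0 < d) (hde : d * e = Fintype.card K - 1)
    (R : K → Prop) [DecidablePred R] (hR0 : R 0) :
    ((univ : Finset K).filter fun x => R (x ^ d)).card
      = 1 + d * ((univ : Finset K).filter fun w => w ^ e = 1 ∧ R w).card := by
  have hcard2 : 0 < Fintype.card K - 1 := by
    have := Fintype.one_lt_card (α := K); omega
  have he : 0 < e := by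
    rcases Nat.eq_zero_or_pos e with h | h
    · rw [h, mul_zero] at hde; omega
    · exact h
  have hsplit : ((univ : Finset K).filter fun x => R (x ^ d))
      = insert (0 : K) (((univ : Finset K).filter fun x => x ≠ 0 ∧ R (x ^ d))) := by
    ext x
    simp only [mem_filter, mem_insert, mem_univ, true_and]
    rcases eq_or_ne x 0 with rfl | hx
    · simp [zero_pow hd.ne', hR0]
    · simp [hx]
  rw [hsplit, Finset.card_insert_of_notMem (by simp)]
  have key : (((univ : Finset K).filter fun x => x ≠ 0 ∧ R (x ^ d))).card
      = d * ((univ : Finset K).filter fun w => w ^ e = 1 ∧ R w).card := by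
    have hmapsto : ∀ x ∈ (univ : Finset K).filter fun x => x ≠ 0 ∧ R (x ^ d),
        x ^ d ∈ (univ : Finset K).filter fun w => w ^ e = 1 ∧ R w := by
      intro x hx
      rw [mem_filter] at hx ⊢
      refine ⟨mem_univ _, ?_, hx.2.2⟩
      rw [← pow_mul, hde]
      exact FiniteField.pow_card_sub_one_eq_one x hx.2.1
    rw [Finset.card_eq_sum_card_fiberwise hmapsto]
    have hfib : ∀ w ∈ (univ : Finset K).filter fun w => w ^ e = 1 ∧ R w,
        ((((univ : Finset K).filter fun x => x ≠ 0 ∧ R (x ^ d))).filter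
          fun x => x ^ d = w).card = d := by
      intro w hw
      rw [mem_filter] at hw
      obtain ⟨v, hv⟩ := (roots_card hd hde).2 w hw.2.1
      have hw0 : w ≠ 0 := by
        intro h; rw [h, zero_pow he.ne'] at hw; exact zero_ne_one hw.2.1
      have hv0 : v ≠ 0 := by rintro rfl; rw [zero_pow hd.ne'] at hv; exact hw0 hv.symm
      have hfiber : (((univ : Finset K).filter fun x => x ≠ 0 ∧ R (x ^ d)).filter
          fun x => x ^ d = w) = (univ : Finset K).filter fun x => x ^ d = w := by
        ext x
        simp only [mem_filter, mem_univ, true_and]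
        constructor
        · rintro ⟨_, h⟩; exact h
        · intro h
          have hx0 : x ≠ 0 := by rintro rfl; rw [zero_pow hd.ne'] at h; exact hw0 h.symm
          exact ⟨⟨hx0, by rw [h]; exact hw.2.2⟩, h⟩
      rw [hfiber]
      have hbij : ((univ : Finset K).filter fun x => x ^ d = w).card
          = ((univ : Finset K).filter fun z => z ^ d = 1).card := by
        apply Finset.card_bij' (fun x _ => x * v⁻¹) (fun z _ => z * v)
        · intro x hx
          rw [mem_filter] at hx ⊢
          refine ⟨mem_univ _, ?_⟩
          rw [mul_pow, hx.2, inv_pow, hv, mul_inv_cancel₀ hw0]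
        · intro z hz
          rw [mem_filter] at hz ⊢
          refine ⟨mem_univ _, ?_⟩
          rw [mul_pow, hz.2, one_mul, hv]
        · intro x _; field_simp
        · intro z _; field_simp
      rw [hbij, (roots_card he (by rw [mul_comm]; exact hde)).1]
    rw [Finset.sum_congr rfl hfib, Finset.sum_const, smul_eq_mul, mul_comm]
  omega

end AuxCounting

lemma charP_of_card {K : Type} [Field K] [Fintype K] {p r : ℕ} (hp : p.Prime) (hr : 0 < r)
    (h : Fintype.card K = p ^ r) : CharP K p := by
  obtain ⟨n, hq', hcard⟩ := FiniteField.card K (ringChar K)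
  have hq'p : ringChar K = p := by
    have hdvd : p ∣ ringChar K ^ (n : ℕ) := by
      rw [← hcard, h]; exact dvd_pow_self p hr.ne'
    have := hp.dvd_of_dvd_pow hdvd
    exact ((Nat.prime_dvd_prime_iff_eq hp hq').1 this).symm
  exact hq'p ▸ ringChar.charP K

section AS

variable {K : Type} [Field K] [Fintype K] [DecidableEq K] (p : ℕ) [Fact p.Prime] [CharP K p]

lemma as_ker_card : ((univ : Finset K).filter fun y => y ^ p - y = 0).card = p := by
  have hp : p.Prime := Fact.out
  have h1 : ((univ : Finset K).filter fun y => y ^ p - y = 0)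
      = ((univ : Finset K).filter fun y => y ^ p = y) := by
    ext y; simp [sub_eq_zero]
  rw [h1]
  apply le_antisymm
  · have hne : (Polynomial.X ^ p - Polynomial.X : Polynomial K) ≠ 0 := by
      intro h
      have h2 := congrArg Polynomial.natDegree (sub_eq_zero.1 h)
      simp only [Polynomial.natDegree_X_pow, Polynomial.natDegree_X] at h2
      exact hp.one_lt.ne' h2
    have hsub : ((univ : Finset K).filter fun y => y ^ p = y)
        ⊆ (Polynomial.X ^ p - Polynomial.X : Polynomial K).roots.toFinset := by
      intro y hy
      rw [mem_filter] at hy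
      rw [Multiset.mem_toFinset, Polynomial.mem_roots hne]
      simp [Polynomial.IsRoot, hy.2, sub_eq_zero]
    calc ((univ : Finset K).filter fun y => y ^ p = y).card
        ≤ _ := Finset.card_le_card hsub
      _ ≤ Multiset.card (Polynomial.X ^ p - Polynomial.X : Polynomial K).roots :=
          (Polynomial.X ^ p - Polynomial.X : Polynomial K).roots.toFinset_card_le
      _ ≤ (Polynomial.X ^ p - Polynomial.X : Polynomial K).natDegree :=
          Polynomial.card_roots' _
      _ ≤ p := by
          apply le_trans (Polynomial.natDegree_sub_le _ _)
          simp [Polynomial.natDegree_X_pow, Polynomial.natDegree_X, hp.one_lt.le]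
  · have hinj : Function.Injective (ZMod.castHom (dvd_refl p) K) :=
      (ZMod.castHom (dvd_refl p) K).injective
    calc p = Fintype.card (ZMod p) := (ZMod.card p).symm
      _ = ((univ : Finset (ZMod p)).image (ZMod.castHom (dvd_refl p) K)).card := by
          rw [Finset.card_image_of_injective _ hinj, card_univ]
      _ ≤ _ := by
          apply Finset.card_le_card
          intro y hy
          rw [Finset.mem_image] at hy
          obtain ⟨z, _, rfl⟩ := hy
          rw [mem_filter]
          refine ⟨mem_univ _, ?_⟩
          rw [← map_pow, ZMod.pow_card]

lemma paircount (v : K → K) :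
    ((univ : Finset (K × K)).filter fun xy => xy.2 ^ p - xy.2 = v xy.1).card
      = p * ((univ : Finset K).filter fun x => ∃ y : K, y ^ p - y = v x).card := by
  classical
  have hAS : ∀ x y : K, (x - y) ^ p - (x - y) = (x ^ p - x) - (y ^ p - y) := by
    intro x y; rw [sub_pow_char]; ring
  rw [Finset.card_eq_sum_card_fiberwise (f := Prod.fst) (t := univ) (fun x _ => mem_univ _)]
  have hfib : ∀ x ∈ (univ : Finset K),
      (((univ : Finset (K × K)).filter fun xy => xy.2 ^ p - xy.2 = v xy.1).filter
        fun xy => xy.1 = x).card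
      = if (∃ y : K, y ^ p - y = v x) then p else 0 := by
    intro x _
    have hbij : (((univ : Finset (K × K)).filter fun xy => xy.2 ^ p - xy.2 = v xy.1).filter
        fun xy => xy.1 = x).card
        = ((univ : Finset K).filter fun y => y ^ p - y = v x).card := by
      apply Finset.card_bij' (fun xy _ => xy.2) (fun y _ => (x, y))
      case hi =>
        intro xy hxy
        simp only [mem_filter, mem_univ, true_and] at hxy ⊢
        rw [← hxy.2]; exact hxy.1
      case hj =>
        intro y hy
        simp only [mem_filter, mem_univ, true_and] at hy ⊢
        exact ⟨hy, trivial⟩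
      case left_inv =>
        intro xy hxy
        simp only [mem_filter] at hxy
        rw [← hxy.2]
      case right_inv =>
        intro y _
        rfl
    rw [hbij]
    split_ifs with hex
    · obtain ⟨y0, hy0⟩ := hex
      rw [fiber_card univ (fun y => y ^ p - y) hAS (fun _ _ _ _ => mem_univ _)
        (fun _ _ _ _ => mem_univ _) (mem_univ y0) hy0]
      exact as_ker_card p
    · rw [Finset.card_eq_zero]
      rw [Finset.filter_eq_empty_iff]
      intro y _
      exact fun h => hex ⟨y, h⟩
  rw [Finset.sum_congr rfl hfib, Finset.sum_ite, Finset.sum_const, Finset.sum_const_zero,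
    add_zero, smul_eq_mul, mul_comm]

end AS

lemma psi_geom {q : ℕ} (hq : 1 ≤ q) (r : ℕ) : psi r q * (q - 1) + 1 = q ^ r := by
  induction r with
  | zero => simp [psi]
  | succ r ih =>
    have hstep : psi (r + 1) q = psi r q + q ^ r := by
      rw [psi, Finset.sum_range_succ, ← psi]
    have hmul : q ^ r * (q - 1) + q ^ r = q ^ r * q := by
      calc q ^ r * (q - 1) + q ^ r = q ^ r * ((q - 1) + 1) := by ring
        _ = q ^ r * q := by rw [Nat.sub_add_cancel hq]
    rw [hstep, add_mul, pow_succ]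
    omega

lemma psi_succ {q b : ℕ} (hb : 0 < b) : psi b q = 1 + q * psi (b - 1) q := by
  obtain ⟨b', rfl⟩ : ∃ b', b = b' + 1 := ⟨b - 1, by omega⟩
  simp only [Nat.add_sub_cancel]
  rw [psi, Finset.sum_range_succ', pow_zero]
  have : ∀ i ∈ Finset.range b', q ^ (i + 1) = q * q ^ i := fun i _ => by rw [pow_succ']
  rw [Finset.sum_congr rfl this, ← Finset.mul_sum, ← psi]
  omega

theorem stmt14 (p k m n a b c u : ℕ) (hp : p.Prime)
    (hk : 0 < k) (ha : 0 < a) (hcpos : 0 < c) (hupos : 0 < u)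
    (hkdvd : k ∣ p ^ m - 1) (hn : n * k = p ^ m - 1)
    (hm : m = a * b) (hnbc : n = b * c) (hb : 1 < b)
    (huc : u * c = p ^ a - 1)
    (hcprim : IsPrimitiveDivisor c p a) (hnprim : IsPrimitiveDivisor n p m)
    (hpc : (p - 1) ∣ c)
    (F E : Type) [Field F] [Fintype F] [DecidableEq F]
    [Field E] [Fintype E] [DecidableEq E]
    (hFcard : Fintype.card F = p ^ a) (hEcard : Fintype.card E = p ^ m) :
    ∀ β : E, ∃ α : Fin b → F,
      Nat.ModEq (p ^ a) (b * ascount p E k β)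
        (psi b (p ^ a) * ∑ i : Fin b, ascount p F u (α i)) ∧
      Nat.ModEq (psi (b - 1) (p ^ a)) (b * ascount p E k β)
        (p ^ (a * (b - 1)) * ∑ i : Fin b, ascount p F u (α i)) := by
  classical
  intro β
  haveI : Fact p.Prime := ⟨hp⟩
  have hb0 : 0 < b := by omega
  have hm0 : 0 < m := by rw [hm]; positivity
  haveI charE : CharP E p := charP_of_card hp hm0 hEcard
  haveI charF : CharP F p := charP_of_card hp ha hFcard
  set q : ℕ := p ^ a with hqdef
  have hq1 : 1 < q := Nat.one_lt_pow ha.ne' hp.one_lt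
  have hq0 : 0 < q := by omega
  have hcardE : Fintype.card E = q ^ b := by rw [hEcard, hm, pow_mul]
  have hn0 : 0 < n := by rw [hnbc]; positivity
  have hcardE1 : k * n = Fintype.card E - 1 := by
    rw [hcardE, ← pow_mul, ← hm, ← hn]; ring
  have hcardF1 : u * c = Fintype.card F - 1 := by rw [hFcard]; exact huc
  have hcq : c ∣ q - 1 := ⟨u, by rw [← huc]; ring⟩
  -- the Artin–Schreier image predicates
  set InV : E → Prop := fun s => ∃ y : E, y ^ p - y = s with hInVdef
  set InVS : E → Prop := fun s => ∃ y : E, y ^ q = y ∧ y ^ p - y = s with hInVSdef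
  -- E-side point count
  set Zc : ℕ := ((univ : Finset E).filter fun w => w ^ n = 1 ∧ InV (β * w)).card with hZcdef
  have hNval : ascount p E k β = 1 + p * (1 + k * Zc) := by
    rw [ascount, paircount p (v := fun x : E => β * x ^ k)]
    congr 1
    congr 1
    rw [powcount hk hcardE1 (R := fun w : E => InV (β * w)) ⟨0, by simp [hp.ne_zero]⟩]
  -- basic char-p facts
  have hasub : ∀ x y : E, (x - y) ^ p - (x - y) = (x ^ p - x) - (y ^ p - y) := by
    intro x y; rw [sub_pow_char]; ring
  have hqsub : ∀ x y : E, (x - y) ^ q = x ^ q - y ^ q := by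
    intro x y; rw [hqdef]; exact sub_pow_char_pow x y a
  have hqadd : ∀ x y : E, (x + y) ^ q = x ^ q + y ^ q := by
    intro x y; rw [hqdef]; exact add_pow_char_pow x y p a
  have hfixpow : ∀ s : E, s ^ q = s → ∀ j : ℕ, s ^ q ^ j = s := by
    intro s hs j
    induction j with
    | zero => simp
    | succ j ih => rw [pow_succ, pow_mul, ih, hs]
  have hppow : ∀ s : E, s ^ p = s → s ^ q = s := by
    intro s hs
    have hall : ∀ t : ℕ, s ^ p ^ t = s := by
      intro t
      induction t with
      | zero => simp
      | succ t ih => rw [pow_succ, pow_mul, ih, hs]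
    rw [hqdef]; exact hall a
  -- the relative trace map from E to its subfield with q elements
  set T : E → E := fun x => ∑ j ∈ Finset.range b, x ^ q ^ j with hTdef
  have hqj : ∀ j : ℕ, q ^ j = p ^ (a * j) := by
    intro j; rw [hqdef, ← pow_mul]
  have hTsub : ∀ x y : E, T (x - y) = T x - T y := by
    intro x y
    simp only [hTdef]
    rw [← Finset.sum_sub_distrib]
    apply Finset.sum_congr rfl
    intro j _
    rw [hqj j]
    exact sub_pow_char_pow x y (a * j)
  have hTpowp : ∀ y : E, T (y ^ p) = (T y) ^ p := by
    intro y
    simp only [hTdef]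
    rw [sum_pow_char]
    apply Finset.sum_congr rfl
    intro j _
    rw [← pow_mul, mul_comm, pow_mul]
  have hTfix : ∀ x : E, (T x) ^ q = T x := by
    intro x
    have hxb : x ^ q ^ b = x := by rw [← hcardE]; exact FiniteField.pow_card x
    have h1 : (T x) ^ q = ∑ j ∈ Finset.range b, x ^ q ^ (j + 1) := by
      simp only [hTdef]
      rw [hqdef, sum_pow_char_pow]
      apply Finset.sum_congr rfl
      intro j _
      rw [← hqdef, ← pow_mul, ← pow_succ]
    obtain ⟨b', rfl⟩ : ∃ b', b = b' + 1 := ⟨b - 1, by omega⟩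
    rw [h1]
    simp only [hTdef]
    rw [Finset.sum_range_succ, Finset.sum_range_succ', hxb, pow_zero, pow_one]
  have hTlin : ∀ s x : E, s ^ q = s → T (s * x) = s * T x := by
    intro s x hs
    simp only [hTdef]
    rw [Finset.mul_sum]
    apply Finset.sum_congr rfl
    intro j _
    rw [mul_pow, hfixpow s hs j]
  have hTsurj : ∀ s : E, s ^ q = s → ∃ x : E, T x = s := by
    have hx0 : ∃ x0 : E, T x0 ≠ 0 := by
      set P : Polynomial E := ∑ j ∈ Finset.range b, Polynomial.X ^ q ^ j with hPdef
      have hPeval : ∀ x : E, P.eval x = T x := by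
        intro x
        simp only [hPdef, hTdef, Polynomial.eval_finset_sum, Polynomial.eval_pow,
          Polynomial.eval_X]
      have hPcoeff : P.coeff (q ^ (b - 1)) = 1 := by
        simp only [hPdef, Polynomial.finset_sum_coeff, Polynomial.coeff_X_pow]
        rw [Finset.sum_eq_single (b - 1)]
        · simp
        · intro j hj hjne
          rw [if_neg]
          intro hcon
          exact hjne (Nat.pow_right_injective (by omega) hcon).symm
        · intro hcon
          exact absurd (Finset.mem_range.2 (by omega)) hcon
      have hPne : P ≠ 0 := by
        intro h
        rw [h, Polynomial.coeff_zero] at hPcoeff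
        exact one_ne_zero hPcoeff.symm
      have hPdeg : P.natDegree ≤ q ^ (b - 1) := by
        apply Polynomial.natDegree_sum_le_of_forall_le
        intro j hj
        rw [Polynomial.natDegree_X_pow]
        exact Nat.pow_le_pow_right hq0 (by rw [Finset.mem_range] at hj; omega)
      by_contra hcon
      push_neg at hcon
      have hall : (univ : Finset E) ⊆ P.roots.toFinset := by
        intro x _
        rw [Multiset.mem_toFinset, Polynomial.mem_roots hPne]
        rw [Polynomial.IsRoot, hPeval]
        exact hcon x
      have hle : Fintype.card E ≤ q ^ (b - 1) :=
        le_trans (le_trans (Finset.card_le_card hall)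
          (le_trans (P.roots.toFinset_card_le) (Polynomial.card_roots' P))) hPdeg
      rw [hcardE] at hle
      have : q ^ (b - 1) < q ^ b := Nat.pow_lt_pow_right hq1 (by omega)
      omega
    obtain ⟨x0, hx0ne⟩ := hx0
    intro s hs
    refine ⟨s * (T x0)⁻¹ * x0, ?_⟩
    have hsc : (s * (T x0)⁻¹) ^ q = s * (T x0)⁻¹ := by
      rw [mul_pow, hs, inv_pow, hTfix x0]
    rw [hTlin _ _ hsc]
    field_simp
  -- cardinality of the fixed subfield
  set Afix : Finset E := (univ : Finset E).filter (fun t => t ^ q = t) with hAfixdef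
  have hgeo : psi b q * (q - 1) = q ^ b - 1 := by
    have := psi_geom hq0 b; omega
  have hqb1 : 1 < q ^ b := Nat.one_lt_pow hb0.ne' hq1
  have hpsipos : 0 < psi b q := by
    rcases Nat.eq_zero_or_pos (psi b q) with h | h
    · rw [h, zero_mul] at hgeo; omega
    · exact h
  have hAfixcard : Afix.card = q := by
    have hde : psi b q * (q - 1) = Fintype.card E - 1 := by rw [hcardE]; exact hgeo
    have hroots := (roots_card hpsipos hde).1
    have hset : Afix = insert (0:E) ((univ : Finset E).filter fun w => w ^ (q-1) = 1) := by
      ext t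
      simp only [hAfixdef, mem_filter, mem_insert, mem_univ, true_and]
      constructor
      · intro ht
        rcases eq_or_ne t 0 with rfl | ht0
        · left; rfl
        · right
          have h2 : t ^ (q - 1) * t = 1 * t := by
            rw [one_mul, ← pow_succ, show q - 1 + 1 = q from by omega]
            exact ht
          exact mul_right_cancel₀ ht0 h2
      · intro ht
        rcases ht with rfl | ht1
        · exact zero_pow (by omega)
        · calc t ^ q = t ^ (q - 1) * t := by
                rw [← pow_succ, show q - 1 + 1 = q from by omega]
          _ = t := by rw [ht1, one_mul]
    rw [hset, Finset.card_insert_of_notMem, hroots]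
    · omega
    · simp only [mem_filter, mem_univ, true_and]
      rw [zero_pow (by omega : q - 1 ≠ 0)]
      exact zero_ne_one
  -- the Artin-Schreier counting chain
  have hVcard : ((univ : Finset E).filter InV).card * p = q ^ b := by
    have h1 := comp_count (univ : Finset E) (fun y => y ^ p - y) hasub
      (fun _ _ _ _ => mem_univ _) (fun _ _ _ _ => mem_univ _) InV
      (fun s hs => by obtain ⟨y, hy⟩ := hs; exact ⟨y, mem_univ _, hy⟩)
    rw [Finset.filter_true_of_mem (fun x _ => ⟨x, rfl⟩), as_ker_card p] at h1
    rw [← hcardE, ← Finset.card_univ]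
    exact h1.symm
  have hkerTcard : q * ((univ : Finset E).filter fun x => T x = 0).card = q ^ b := by
    have h2 := comp_count (univ : Finset E) T hTsub
      (fun _ _ _ _ => mem_univ _) (fun _ _ _ _ => mem_univ _) (fun t => t ^ q = t)
      (fun s hs => by obtain ⟨x, hx⟩ := hTsurj s hs; exact ⟨x, mem_univ _, hx⟩)
    rw [Finset.filter_true_of_mem (fun x _ => hTfix x), ← hAfixdef, hAfixcard] at h2
    rw [← hcardE, ← Finset.card_univ]
    exact h2.symm
  have hInVSfix : ∀ s : E, InVS s → s ^ q = s := by
    rintro s ⟨y, hyq, hys⟩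
    rw [← hys]
    calc (y ^ p - y) ^ q = (y ^ p) ^ q - y ^ q := hqsub _ _
      _ = (y ^ q) ^ p - y ^ q := by rw [← pow_mul, mul_comm, pow_mul]
      _ = y ^ p - y := by rw [hyq]
  have hWcard : ((univ : Finset E).filter fun x => InVS (T x)).card
      = ((univ : Finset E).filter InVS).card * ((univ : Finset E).filter fun x => T x = 0).card :=
    comp_count (univ : Finset E) T hTsub
      (fun _ _ _ _ => mem_univ _) (fun _ _ _ _ => mem_univ _) InVS
      (fun s hs => by obtain ⟨x, hx⟩ := hTsurj s (hInVSfix s hs); exact ⟨x, mem_univ _, hx⟩)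
  have hVScard : ((univ : Finset E).filter InVS).card * p = q := by
    have hclosub : ∀ x ∈ Afix, ∀ y ∈ Afix, x - y ∈ Afix := by
      intro x hx y hy
      simp only [hAfixdef, mem_filter, mem_univ, true_and] at hx hy ⊢
      rw [hqsub, hx, hy]
    have hcloadd : ∀ x ∈ Afix, ∀ y ∈ Afix, x + y ∈ Afix := by
      intro x hx y hy
      simp only [hAfixdef, mem_filter, mem_univ, true_and] at hx hy ⊢
      rw [hqadd, hx, hy]
    have h3 := comp_count Afix (fun y => y ^ p - y) hasub hclosub hcloadd InVS
      (fun s hs => by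
        obtain ⟨y, hyq, hys⟩ := hs
        exact ⟨y, by simp only [hAfixdef, mem_filter, mem_univ, true_and]; exact hyq, hys⟩)
    rw [Finset.filter_true_of_mem (fun x hx => by
      refine ⟨x, ?_, rfl⟩
      simp only [hAfixdef, mem_filter, mem_univ, true_and] at hx
      exact hx)] at h3
    have hker2 : (Afix.filter fun y => y ^ p - y = 0) = ((univ : Finset E).filter fun y => y ^ p - y = 0) := by
      ext y
      simp only [hAfixdef, mem_filter, mem_univ, true_and, Finset.filter_filter]
      constructor
      · rintro ⟨_, h⟩; exact h
      · intro h
        exact ⟨hppow y (by rw [sub_eq_zero] at h; exact h), h⟩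
    rw [hker2, as_ker_card p] at h3
    exact h3.symm.trans hAfixcard
  have hkey : ∀ x : E, InV x ↔ InVS (T x) := by
    have hfwd : ∀ x : E, InV x → InVS (T x) := by
      rintro x ⟨y, hy⟩
      refine ⟨T y, hTfix y, ?_⟩
      rw [← hTpowp y, ← hTsub, hy]
    have hsubset : ((univ : Finset E).filter InV) ⊆ ((univ : Finset E).filter fun x => InVS (T x)) := by
      intro x hx
      rw [mem_filter] at hx ⊢
      exact ⟨hx.1, hfwd x hx.2⟩
    have hcardeq : ((univ : Finset E).filter fun x => InVS (T x)).card
        = ((univ : Finset E).filter InV).card := by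
      have hppos : 0 < p := hp.pos
      have e1 : (((univ : Finset E).filter fun x => InVS (T x)).card) * p
          = ((univ : Finset E).filter InV).card * p := by
        calc (((univ : Finset E).filter fun x => InVS (T x)).card) * p
            = (((univ : Finset E).filter InVS).card * p) * ((univ : Finset E).filter fun x => T x = 0).card := by
              rw [hWcard]; ring
          _ = q * ((univ : Finset E).filter fun x => T x = 0).card := by rw [hVScard]
          _ = q ^ b := hkerTcard
          _ = ((univ : Finset E).filter InV).card * p := hVcard.symm
      exact Nat.eq_of_mul_eq_mul_right hppos e1
    have hseteq := Finset.eq_of_subset_of_card_le hsubset (le_of_eq hcardeq)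
    intro x
    constructor
    · exact hfwd x
    · intro hx
      have : x ∈ (univ : Finset E).filter InV := by
        rw [hseteq, mem_filter]
        exact ⟨mem_univ _, hx⟩
      rw [mem_filter] at this
      exact this.2
  -- c-th roots of unity are in the fixed subfield
  have hcfix : ∀ t : E, t ^ c = 1 → t ^ q = t := by
    intro t ht
    have h1 : t ^ (q - 1) = 1 := by
      rw [← huc, mul_comm, pow_mul, ht, one_pow]
    calc t ^ q = t ^ (q - 1) * t := by
          rw [← pow_succ, show q - 1 + 1 = q from by omega]
      _ = t := by rw [h1, one_mul]
  -- coset decomposition of the n-th roots of unity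
  obtain ⟨g, hord, hgen⟩ := gen_exists (K := E)
  have hordE : orderOf g = k * n := by rw [hord, hcardE1]
  set hu : Eˣ := g ^ k with hhdef
  have hordh : orderOf hu = n := by
    rw [hhdef, orderOf_pow, hordE, Nat.gcd_comm, Nat.gcd_eq_left ⟨n, rfl⟩,
      Nat.mul_div_cancel_left _ hk]
  have hhn1 : ((hu : E)) ^ n = 1 := by
    have h1 : hu ^ n = 1 := by rw [← hordh]; exact pow_orderOf_eq_one hu
    rw [← Units.val_pow_eq_pow_val, h1, Units.val_one]
  have hu0 : ∀ i : ℕ, ((hu : E)) ^ i ≠ 0 := fun i => pow_ne_zero i (Units.ne_zero hu)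
  have hvalpow : ∀ (v : Eˣ) (i : ℕ), ((v ^ i : Eˣ) : E) = ((v : E)) ^ i :=
    fun v i => Units.val_pow_eq_pow_val v i
  have hdecomp : Zc = ∑ i ∈ Finset.range b, ((univ : Finset E).filter
      fun t => t ^ c = 1 ∧ InV (β * ((hu : E) ^ i * t))).card := by
    have hunion : ((univ : Finset E).filter fun w => w ^ n = 1 ∧ InV (β * w))
        = (Finset.range b).biUnion (fun i => ((univ : Finset E).filter
            fun t => t ^ c = 1 ∧ InV (β * ((hu : E) ^ i * t))).image
              (fun t => (hu : E) ^ i * t)) := by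
      ext w
      simp only [mem_filter, mem_univ, true_and, Finset.mem_biUnion, Finset.mem_image,
        Finset.mem_range]
      constructor
      · rintro ⟨hwn, hwV⟩
        have hw0 : w ≠ 0 := by
          intro hcon; rw [hcon, zero_pow hn0.ne'] at hwn; exact zero_ne_one hwn
        obtain ⟨t, ht⟩ := hgen (Units.mk0 w hw0)
        have htw : (g : E) ^ t = w := by rw [← Units.val_pow_eq_pow_val, ht]; rfl
        have hvn : (g ^ t : Eˣ) ^ n = 1 := by
          apply Units.ext
          rw [← pow_mul, Units.val_pow_eq_pow_val, Units.val_one, pow_mul, htw]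
          exact hwn
        have hdvd : k * n ∣ t * n := by
          rw [← pow_mul] at hvn
          have h5 := orderOf_dvd_of_pow_eq_one hvn
          rwa [hordE] at h5
        obtain ⟨s, rfl⟩ := (Nat.mul_dvd_mul_iff_right hn0).1 hdvd
        have hus : hu ^ (s % n) = hu ^ s := by
          rw [← hordh]; exact pow_mod_orderOf _ _
        have husw : ((hu : E)) ^ (s % n) = w := by
          rw [← hvalpow, hus, hhdef, ← pow_mul, hvalpow, pow_mul, ← pow_mul]
          exact htw
        set s' := s % n with hs'def
        have hs'n : s' < n := Nat.mod_lt _ hn0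
        refine ⟨s' % b, Nat.mod_lt _ hb0, ((hu : E) ^ b) ^ (s' / b), ⟨?_, ?_⟩, ?_⟩
        · rw [← pow_mul, ← pow_mul,
            show b * (s' / b * c) = n * (s' / b) from by rw [hnbc]; ring,
            pow_mul, hhn1, one_pow]
        · have harr : (hu : E) ^ (s' % b) * ((hu : E) ^ b) ^ (s' / b) = w := by
            rw [← pow_mul, ← pow_add, Nat.mod_add_div s' b]
            exact husw
          rw [harr]
          exact hwV
        · rw [← pow_mul, ← pow_add, Nat.mod_add_div s' b]
          exact husw
      · rintro ⟨i, hib, t, ⟨htc, htV⟩, rfl⟩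
        constructor
        · rw [mul_pow, ← pow_mul, mul_comm i n, pow_mul, hhn1, one_pow, one_mul]
          rw [hnbc, mul_comm b c, pow_mul, htc, one_pow]
        · exact htV
    have hdisj : ∀ i ∈ Finset.range b, ∀ i' ∈ Finset.range b, i ≠ i' →
        Disjoint (((univ : Finset E).filter
            fun t => t ^ c = 1 ∧ InV (β * ((hu : E) ^ i * t))).image
              (fun t => (hu : E) ^ i * t))
          (((univ : Finset E).filter
            fun t => t ^ c = 1 ∧ InV (β * ((hu : E) ^ i' * t))).image
              (fun t => (hu : E) ^ i' * t)) := by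
      intro i hi i' hi' hne
      rw [Finset.mem_range] at hi hi'
      rw [Finset.disjoint_left]
      rintro y hy hy'
      rw [Finset.mem_image] at hy hy'
      obtain ⟨t, ht, rfl⟩ := hy
      obtain ⟨t', ht', heq⟩ := hy'
      rw [mem_filter] at ht ht'
      have hpowc : ((hu : E)) ^ (i' * c) = ((hu : E)) ^ (i * c) := by
        have h6 := congrArg (fun z : E => z ^ c) heq
        rw [mul_pow, mul_pow, ht'.2.1, ht.2.1, mul_one, mul_one, ← pow_mul, ← pow_mul] at h6
        exact h6
      have hunits : hu ^ (i' * c) = hu ^ (i * c) := by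
        apply Units.ext
        rw [hvalpow, hvalpow]
        exact hpowc
      have hmod : (i' * c) ≡ (i * c) [MOD n] := by
        rw [← hordh]
        exact pow_eq_pow_iff_modEq.1 hunits
      rw [hnbc] at hmod
      have hmod2 : i' ≡ i [MOD b] := Nat.ModEq.mul_right_cancel' hcpos.ne' hmod
      have : i' = i := by
        have h7 := hmod2
        unfold Nat.ModEq at h7
        rw [Nat.mod_eq_of_lt hi', Nat.mod_eq_of_lt hi] at h7
        exact h7
      exact hne this.symm
    rw [hZcdef, hunion, Finset.card_biUnion hdisj]
    apply Finset.sum_congr rfl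
    intro i _
    rw [Finset.card_image_of_injective _ (mul_right_injective₀ (hu0 i))]
  -- the subfield with q elements, and transport to F
  set Sf : Subfield E :=
    { carrier := {t : E | t ^ q = t}
      mul_mem' := fun {x y} hx hy => by
        simp only [Set.mem_setOf_eq] at *; rw [mul_pow, hx, hy]
      one_mem' := one_pow q
      add_mem' := fun {x y} hx hy => by
        simp only [Set.mem_setOf_eq] at *; rw [hqadd, hx, hy]
      zero_mem' := zero_pow hq0.ne'
      neg_mem' := fun {x} hx => by
        simp only [Set.mem_setOf_eq] at *
        calc (-x) ^ q = (0 - x) ^ q := by rw [zero_sub]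
          _ = 0 ^ q - x ^ q := hqsub 0 x
          _ = -x := by rw [zero_pow hq0.ne', hx, zero_sub]
      inv_mem' := fun x hx => by
        simp only [Set.mem_setOf_eq] at *; rw [inv_pow, hx] } with hSfdef
  have hmemSf : ∀ t : E, t ∈ Sf ↔ t ^ q = t := fun t => Iff.rfl
  letI hftSf : Fintype Sf := Fintype.ofFinset Afix (by
    intro t
    simp only [hAfixdef, mem_filter, mem_univ, true_and]
    exact (hmemSf t).symm)
  have hScard : Fintype.card Sf = q := by
    rw [← hAfixcard]
    exact Fintype.card_ofFinset _ _
  have hcards : Fintype.card F = Fintype.card Sf := by rw [hFcard, hScard, hqdef]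
  set ρ : F ≃+* Sf := FiniteField.ringEquivOfCardEq hcards with hρdef
  set ι : F →+* E := Sf.subtype.comp (ρ : F →+* Sf) with hιdef
  have hιinj : Function.Injective ι := ι.injective
  have hιfix : ∀ x : F, (ι x) ^ q = ι x := fun x => (hmemSf _).1 (ρ x).2
  have hιsur : ∀ t : E, t ^ q = t → ∃ x : F, ι x = t := by
    intro t ht
    refine ⟨ρ.symm ⟨t, (hmemSf t).2 ht⟩, ?_⟩
    rw [hιdef]
    simp only [RingHom.coe_comp, Function.comp_apply, RingEquiv.coe_toRingHom,
      RingEquiv.apply_symm_apply, Subfield.coe_subtype]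
  set αn : ℕ → F := fun i => ρ.symm ⟨T (β * (hu : E) ^ i), (hmemSf _).2 (hTfix _)⟩ with hαndef
  have hια : ∀ i : ℕ, ι (αn i) = T (β * (hu : E) ^ i) := by
    intro i
    rw [hαndef, hιdef]
    simp only [RingHom.coe_comp, Function.comp_apply, RingEquiv.coe_toRingHom,
      RingEquiv.apply_symm_apply, Subfield.coe_subtype]
  -- key pointwise identification on cosets
  have hpoint : ∀ (i : ℕ) (t : F), t ^ c = 1 →
      (InV (β * ((hu : E) ^ i * ι t)) ↔ ∃ y : F, y ^ p - y = αn i * t) := by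
    intro i t htc
    have hιt : (ι t) ^ q = ι t := hιfix t
    have hTcomp : T (β * ((hu : E) ^ i * ι t)) = ι (αn i * t) := by
      have harr : β * ((hu : E) ^ i * ι t) = ι t * (β * (hu : E) ^ i) := by ring
      rw [harr, hTlin _ _ hιt, map_mul, hια i]
      ring
    rw [hkey (β * ((hu : E) ^ i * ι t))]
    constructor
    · rintro ⟨y, hyq, hys⟩
      obtain ⟨y0, rfl⟩ := hιsur y hyq
      rw [hTcomp] at hys
      refine ⟨y0, hιinj ?_⟩
      rw [map_sub, map_pow]
      exact hys
    · rintro ⟨y0, hy0⟩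
      refine ⟨ι y0, hιfix y0, ?_⟩
      rw [hTcomp, ← map_pow, ← map_sub, hy0]
  -- transport each coset count to F
  have htrans : ∀ i : ℕ,
      ((univ : Finset E).filter fun t => t ^ c = 1 ∧ InV (β * ((hu : E) ^ i * t))).card
      = ((univ : Finset F).filter fun t => t ^ c = 1 ∧ ∃ y : F, y ^ p - y = αn i * t).card := by
    intro i
    symm
    apply Finset.card_bij' (fun (t : F) _ => ι t) (fun (t' : E) ht' =>
      Classical.choose (hιsur t' (hcfix t' (by
        rw [mem_filter] at ht'; exact ht'.2.1))))
    case hi =>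
      intro t ht
      rw [mem_filter] at ht ⊢
      refine ⟨mem_univ _, ?_, ?_⟩
      · rw [← map_pow, ht.2.1, map_one]
      · exact (hpoint i t ht.2.1).2 ht.2.2
    case hj =>
      intro t' ht'
      have ht'' := ht'
      rw [mem_filter] at ht''
      set t0 := Classical.choose (hιsur t' (hcfix t' (by
        rw [mem_filter] at ht'; exact ht'.2.1))) with ht0def
      have ht0 : ι t0 = t' := Classical.choose_spec (hιsur t' (hcfix t' (by
        rw [mem_filter] at ht'; exact ht'.2.1)))
      rw [mem_filter]
      have ht0c : t0 ^ c = 1 := by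
        apply hιinj
        rw [map_pow, ht0, map_one]
        exact ht''.2.1
      refine ⟨mem_univ _, ht0c, ?_⟩
      apply (hpoint i t0 ht0c).1
      rw [ht0]
      exact ht''.2.2
    case left_inv =>
      intro t ht
      apply hιinj
      exact Classical.choose_spec (hιsur (ι t) (hcfix (ι t) (by
        rw [← map_pow, (mem_filter.1 ht).2.1, map_one])))
    case right_inv =>
      intro t' ht'
      exact Classical.choose_spec (hιsur t' (hcfix t' (mem_filter.1 ht').2.1))
  -- F-side point counts
  set zF : ℕ → ℕ := fun i => ((univ : Finset F).filter
      fun t => t ^ c = 1 ∧ ∃ y : F, y ^ p - y = αn i * t).card with hzFdef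
  have hFval : ∀ i : ℕ, ascount p F u (αn i) = 1 + p * (1 + u * zF i) := by
    intro i
    rw [ascount, paircount p (v := fun x : F => αn i * x ^ u)]
    congr 1
    congr 1
    rw [powcount hupos hcardF1
      (R := fun w : F => ∃ y : F, y ^ p - y = αn i * w) ⟨0, by simp [hp.ne_zero]⟩]
  -- assemble
  have hZsum : Zc = ∑ i ∈ Finset.range b, zF i := by
    rw [hdecomp]
    exact Finset.sum_congr rfl (fun i _ => htrans i)
  refine ⟨fun i => αn i, ?_, ?_⟩
  all_goals {
    rw [Fin.sum_univ_eq_sum_range (fun j => ascount p F u (αn j)) b]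
    have hSsum : ∑ i ∈ Finset.range b, ascount p F u (αn i)
        = (b + p * b) + p * u * Zc := by
      have h8 : ∀ i ∈ Finset.range b, ascount p F u (αn i)
          = (1 + p) + p * u * zF i := by
        intro i _
        rw [hFval i]; ring
      rw [Finset.sum_congr rfl h8, Finset.sum_add_distrib, Finset.sum_const,
        Finset.card_range, ← Finset.mul_sum, ← hZsum, smul_eq_mul]
      ring
    have hbk : b * k = u * psi b q := by
      apply Nat.eq_of_mul_eq_mul_left hcpos
      have h9 : c * (b * k) = n * k := by rw [hnbc]; ring
      have h10 : n * k = q ^ b - 1 := by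
        rw [hn, hm, hqdef, pow_mul]
      have h11 : c * (u * psi b q) = psi b q * (q - 1) := by
        rw [← huc]; ring
      rw [h9, h10, h11, hgeo]
    have hΨ : psi b q = 1 + q * psi (b - 1) q := psi_succ hb0
    set X : ℕ := b + p * b + p * u * Zc with hXdef
    have e1 : b * ascount p E k β = X + q * (psi (b - 1) q * (p * u * Zc)) := by
      calc b * ascount p E k β = b * (1 + p * (1 + k * Zc)) := by rw [hNval]
        _ = b + p * b + p * Zc * (b * k) := by ring
        _ = b + p * b + p * Zc * (u * (1 + q * psi (b - 1) q)) := by rw [hbk, hΨ]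
        _ = X + q * (psi (b - 1) q * (p * u * Zc)) := by rw [hXdef]; ring
    first
    | · -- goal 1 : mod q
        have e2 : psi b q * ((b + p * b) + p * u * Zc) = X + q * (psi (b - 1) q * X) := by
          rw [hΨ, hXdef]; ring
        rw [hSsum, e1, e2]
        show (X + q * (psi (b - 1) q * (p * u * Zc))) % q = (X + q * (psi (b - 1) q * X)) % q
        rw [Nat.add_mul_mod_self_left, Nat.add_mul_mod_self_left]
    | · -- goal 2 : mod psi (b-1) q
        have e3 : b * ascount p E k β = X + psi (b - 1) q * (q * (p * u * Zc)) := by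
          rw [e1]; ring
        have e40 : q ^ (b - 1) = 1 + psi (b - 1) q * (q - 1) := by
          have := psi_geom hq0 (b - 1); omega
        have e4 : p ^ (a * (b - 1)) * ((b + p * b) + p * u * Zc)
            = X + psi (b - 1) q * ((q - 1) * X) := by
          rw [pow_mul, ← hqdef, e40, hXdef]; ring
        rw [hSsum, e3, e4]
        show (X + psi (b - 1) q * (q * (p * u * Zc))) % psi (b - 1) q
          = (X + psi (b - 1) q * ((q - 1) * X)) % psi (b - 1) q
        rw [Nat.add_mul_mod_self_left, Nat.add_mul_mod_self_left]
  }
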